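/- The limit as k → ∞ of S(2^{2k+1} - 1)/√(2^{2k+1} - 1) equals √2. -/

import Mathlib

/-- `inv2 n` is the number of inversions in the binary representation of `n`,
i.e. the number of pairs of bit positions `a > b` such that bit `a` of `n` is `1`
and bit `b` of `n` is `0`. -/
def inv2 (n : ℕ) : ℕ :=
  ((Finset.range (n + 1) ×ˢ Finset.range (n + 1)).filter
    (fun p => p.2 < p.1 ∧ n.testBit p.1 = true ∧ n.testBit p.2 = false)).card

/-- `iSeq n = (-1)^(inv2 n)`. -/
def iSeq (n : ℕ) : ℤ := (-1) ^ inv2 n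


/-- The summatory function `S N = ∑_{0 ≤ n ≤ N} iSeq n`. -/
def S (N : ℕ) : ℤ := ∑ n ∈ Finset.range (N + 1), iSeq n

def ones (n : ℕ) : ℕ :=
  ((Finset.range (n + 1)).filter (fun a => n.testBit a = true)).card

lemma bit_lt {n a : ℕ} (h : n.testBit a = true) : a < n :=
  lt_of_lt_of_le (Nat.lt_two_pow_self (n := a)) (Nat.ge_two_pow_of_testBit h)

lemma inv2_eq (n M : ℕ) (h : n < M) :
    inv2 n = ((Finset.range M ×ˢ Finset.range M).filter
      (fun p => p.2 < p.1 ∧ n.testBit p.1 = true ∧ n.testBit p.2 = false)).card := by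
  unfold inv2
  congr 1
  ext ⟨a, b⟩
  simp only [Finset.mem_filter, Finset.mem_product, Finset.mem_range]
  constructor
  · rintro ⟨⟨h1, h2⟩, h3, h4, h5⟩
    exact ⟨⟨by omega, by omega⟩, h3, h4, h5⟩
  · rintro ⟨⟨h1, h2⟩, h3, h4, h5⟩
    have := bit_lt h4
    exact ⟨⟨by omega, by omega⟩, h3, h4, h5⟩

lemma ones_eq (n M : ℕ) (h : n < M) :
    ones n = ((Finset.range M).filter (fun a => n.testBit a = true)).card := by
  unfold ones
  congr 1
  ext a
  simp only [Finset.mem_filter, Finset.mem_range]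
  constructor
  · rintro ⟨h1, h2⟩; exact ⟨by omega, h2⟩
  · rintro ⟨h1, h2⟩; have := bit_lt h2; exact ⟨by omega, h2⟩

lemma tb_odd_zero (n : ℕ) : (2 * n + 1).testBit 0 = true := by
  simp [Nat.testBit_zero]

lemma tb_odd_succ (n i : ℕ) : (2 * n + 1).testBit (i + 1) = n.testBit i := by
  rw [Nat.testBit_succ]; congr 1; omega

lemma tb_even_zero (n : ℕ) : (2 * n).testBit 0 = false := by
  simp [Nat.testBit_zero]

lemma tb_even_succ (n i : ℕ) : (2 * n).testBit (i + 1) = n.testBit i := by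
  rw [Nat.testBit_succ]; congr 1; omega

lemma inv2_odd (n : ℕ) : inv2 (2 * n + 1) = inv2 n := by
  rw [show inv2 (2*n+1) = _ from rfl, inv2_eq n (2*n+1) (by omega)]
  symm
  apply Finset.card_nbij' (fun p => (p.1 + 1, p.2 + 1)) (fun p => (p.1 - 1, p.2 - 1))
  · rintro ⟨a, b⟩ h
    simp only [Finset.mem_coe, Finset.mem_filter, Finset.mem_product, Finset.mem_range] at h ⊢
    obtain ⟨⟨h1, h2⟩, h3, h4, h5⟩ := h
    exact ⟨⟨by omega, by omega⟩, by omega, by rw [tb_odd_succ]; exact h4,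
      by rw [tb_odd_succ]; exact h5⟩
  · rintro ⟨a, b⟩ h
    simp only [Finset.mem_coe, Finset.mem_filter, Finset.mem_product, Finset.mem_range] at h ⊢
    obtain ⟨⟨h1, h2⟩, h3, h4, h5⟩ := h
    have hb : b ≠ 0 := by rintro rfl; rw [tb_odd_zero] at h5; simp at h5
    obtain ⟨b', rfl⟩ : ∃ b', b = b' + 1 := ⟨b - 1, by omega⟩
    obtain ⟨a', rfl⟩ : ∃ a', a = a' + 1 := ⟨a - 1, by omega⟩
    rw [tb_odd_succ] at h4; rw [tb_odd_succ] at h5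
    exact ⟨⟨by omega, by omega⟩, by omega, by simpa using h4, by simpa using h5⟩
  · rintro ⟨a, b⟩ h; simp
  · rintro ⟨a, b⟩ h
    simp only [Finset.mem_coe, Finset.mem_filter, Finset.mem_product, Finset.mem_range] at h
    obtain ⟨⟨h1, h2⟩, h3, h4, h5⟩ := h
    have hb : b ≠ 0 := by rintro rfl; rw [tb_odd_zero] at h5; simp at h5
    simp only [Prod.mk.injEq]; omega

lemma inv2_even (n : ℕ) : inv2 (2 * n) = inv2 n + ones n := by
  have key : inv2 (2*n) =
      ((Finset.range (2*n+1) ×ˢ Finset.range (2*n+1)).filter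
        (fun p => p.2 < p.1 ∧ (2*n).testBit p.1 = true ∧ (2*n).testBit p.2 = false)).card := rfl
  rw [key]
  rw [← Finset.card_filter_add_card_filter_not (p := fun p : ℕ × ℕ => p.2 = 0)]
  rw [Finset.filter_filter, Finset.filter_filter]
  have e0 : ((Finset.range (2*n+1) ×ˢ Finset.range (2*n+1)).filter
      (fun a => (a.2 < a.1 ∧ (2*n).testBit a.1 = true ∧ (2*n).testBit a.2 = false) ∧ a.2 = 0)).card
      = ones n := by
    rw [ones_eq n (2*n+1) (by omega)]
    symm
    apply Finset.card_nbij' (fun a => (a + 1, 0)) (fun p => p.1 - 1)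
    · intro a h
      simp only [Finset.mem_coe, Finset.mem_filter, Finset.mem_product, Finset.mem_range] at h ⊢
      obtain ⟨h1, h2⟩ := h
      have := bit_lt h2
      exact ⟨⟨by omega, by omega⟩, ⟨by omega, by rw [tb_even_succ]; exact h2,
        tb_even_zero n⟩, by simp⟩
    · rintro ⟨a, b⟩ h
      simp only [Finset.mem_coe, Finset.mem_filter, Finset.mem_product, Finset.mem_range] at h ⊢
      obtain ⟨⟨h1, h2⟩, ⟨h3, h4, h5⟩, h6⟩ := h
      subst h6
      obtain ⟨a', rfl⟩ : ∃ a', a = a' + 1 := ⟨a - 1, by omega⟩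
      rw [tb_even_succ] at h4
      have := bit_lt h4
      exact ⟨by omega, by simpa using h4⟩
    · intro a h; simp
    · rintro ⟨a, b⟩ h
      simp only [Finset.mem_coe, Finset.mem_filter, Finset.mem_product, Finset.mem_range] at h
      obtain ⟨⟨h1, h2⟩, ⟨h3, h4, h5⟩, h6⟩ := h
      subst h6
      simp only [Prod.mk.injEq]
      exact ⟨by omega, trivial⟩
  have e1 : ((Finset.range (2*n+1) ×ˢ Finset.range (2*n+1)).filter
      (fun a => (a.2 < a.1 ∧ (2*n).testBit a.1 = true ∧ (2*n).testBit a.2 = false) ∧ ¬a.2 = 0)).card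
      = inv2 n := by
    rw [inv2_eq n (2*n+1) (by omega)]
    symm
    apply Finset.card_nbij' (fun p => (p.1 + 1, p.2 + 1)) (fun p => (p.1 - 1, p.2 - 1))
    · rintro ⟨a, b⟩ h
      simp only [Finset.mem_coe, Finset.mem_filter, Finset.mem_product, Finset.mem_range] at h ⊢
      obtain ⟨⟨h1, h2⟩, h3, h4, h5⟩ := h
      have := bit_lt h4
      exact ⟨⟨by omega, by omega⟩, ⟨by omega, by rw [tb_even_succ]; exact h4,
        by rw [tb_even_succ]; exact h5⟩, by omega⟩
    · rintro ⟨a, b⟩ h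
      simp only [Finset.mem_coe, Finset.mem_filter, Finset.mem_product, Finset.mem_range] at h ⊢
      obtain ⟨⟨h1, h2⟩, ⟨h3, h4, h5⟩, h6⟩ := h
      obtain ⟨b', rfl⟩ : ∃ b', b = b' + 1 := ⟨b - 1, by omega⟩
      obtain ⟨a', rfl⟩ : ∃ a', a = a' + 1 := ⟨a - 1, by omega⟩
      rw [tb_even_succ] at h4; rw [tb_even_succ] at h5
      exact ⟨⟨by omega, by omega⟩, by omega, by simpa using h4, by simpa using h5⟩
    · rintro ⟨a, b⟩ h; simp
    · rintro ⟨a, b⟩ h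
      simp only [Finset.mem_coe, Finset.mem_filter, Finset.mem_product, Finset.mem_range] at h
      obtain ⟨⟨h1, h2⟩, ⟨h3, h4, h5⟩, h6⟩ := h
      simp only [Prod.mk.injEq]; omega
  omega

lemma ones_even (n : ℕ) : ones (2 * n) = ones n := by
  have key : ones (2*n) =
      ((Finset.range (2*n+1)).filter (fun a => (2*n).testBit a = true)).card := rfl
  rw [key]
  symm
  apply Finset.card_nbij' (fun a => a + 1) (fun a => a - 1)
  · intro a h
    simp only [Finset.mem_coe, Finset.mem_filter, Finset.mem_range] at h ⊢
    obtain ⟨h1, h2⟩ := h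
    have := bit_lt h2
    exact ⟨by omega, by rw [tb_even_succ]; exact h2⟩
  · intro a h
    simp only [Finset.mem_coe, Finset.mem_filter, Finset.mem_range] at h ⊢
    obtain ⟨h1, h2⟩ := h
    have ha : a ≠ 0 := by rintro rfl; rw [tb_even_zero] at h2; simp at h2
    obtain ⟨a', rfl⟩ : ∃ a', a = a' + 1 := ⟨a - 1, by omega⟩
    rw [tb_even_succ] at h2
    have := bit_lt h2
    exact ⟨by omega, by simpa using h2⟩
  · intro a h; simp
  · intro a h
    simp only [Finset.mem_coe, Finset.mem_filter, Finset.mem_range] at h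
    obtain ⟨h1, h2⟩ := h
    have ha : a ≠ 0 := by rintro rfl; rw [tb_even_zero] at h2; simp at h2
    show a - 1 + 1 = a
    omega

lemma ones_odd (n : ℕ) : ones (2 * n + 1) = ones n + 1 := by
  have key : ones (2*n+1) =
      ((Finset.range (2*n+2)).filter (fun a => (2*n+1).testBit a = true)).card := rfl
  rw [key]
  rw [← Finset.card_filter_add_card_filter_not (p := fun a : ℕ => a = 0)]
  rw [Finset.filter_filter, Finset.filter_filter]
  have e1 : ((Finset.range (2*n+2)).filter
      (fun a => (2*n+1).testBit a = true ∧ ¬a = 0)).card = ones n := by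
    rw [ones_eq n (2*n+1) (by omega)]
    symm
    apply Finset.card_nbij' (fun a => a + 1) (fun a => a - 1)
    · intro a h
      simp only [Finset.mem_coe, Finset.mem_filter, Finset.mem_range] at h ⊢
      obtain ⟨h1, h2⟩ := h
      exact ⟨by omega, by rw [tb_odd_succ]; exact h2, by omega⟩
    · intro a h
      simp only [Finset.mem_coe, Finset.mem_filter, Finset.mem_range] at h ⊢
      obtain ⟨h1, h2, h3⟩ := h
      obtain ⟨a', rfl⟩ : ∃ a', a = a' + 1 := ⟨a - 1, by omega⟩
      rw [tb_odd_succ] at h2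
      exact ⟨by omega, by simpa using h2⟩
    · intro a h; simp
    · intro a h
      simp only [Finset.mem_coe, Finset.mem_filter, Finset.mem_range] at h
      show a - 1 + 1 = a
      omega
  have e0 : ((Finset.range (2*n+2)).filter
      (fun a => (2*n+1).testBit a = true ∧ a = 0)).card = 1 := by
    have : (Finset.range (2*n+2)).filter
        (fun a => (2*n+1).testBit a = true ∧ a = 0) = {0} := by
      ext a
      simp only [Finset.mem_filter, Finset.mem_range, Finset.mem_singleton]
      constructor
      · rintro ⟨_, _, h⟩; exact h
      · rintro rfl; exact ⟨by omega, tb_odd_zero n, rfl⟩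
    rw [this, Finset.card_singleton]
  omega

lemma iSeq_even (n : ℕ) : iSeq (2 * n) = (-1) ^ ones n * iSeq n := by
  unfold iSeq; rw [inv2_even, pow_add, mul_comm]

lemma iSeq_odd (n : ℕ) : iSeq (2 * n + 1) = iSeq n := by
  unfold iSeq; rw [inv2_odd]

lemma sum_double (f : ℕ → ℤ) (n : ℕ) :
    ∑ i ∈ Finset.range (2 * n), f i = ∑ i ∈ Finset.range n, (f (2 * i) + f (2 * i + 1)) := by
  induction n with
  | zero => simp
  | succ n ih =>
    rw [show 2 * (n + 1) = 2 * n + 1 + 1 by ring, Finset.sum_range_succ, Finset.sum_range_succ,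
      ih, Finset.sum_range_succ]
    rw [add_assoc]

def T (m : ℕ) : ℤ := ∑ i ∈ Finset.range (2 ^ m), iSeq i
def U (m : ℕ) : ℤ := ∑ i ∈ Finset.range (2 ^ m), (-1) ^ ones i * iSeq i

lemma T_succ (m : ℕ) : T (m + 1) = T m + U m := by
  unfold T U
  rw [pow_succ, mul_comm, sum_double]
  rw [← Finset.sum_add_distrib]
  apply Finset.sum_congr rfl
  intro i _
  rw [iSeq_even, iSeq_odd]
  ring

lemma U_succ (m : ℕ) : U (m + 1) = T m - U m := by
  unfold T U
  rw [pow_succ, mul_comm, sum_double, ← Finset.sum_sub_distrib]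
  apply Finset.sum_congr rfl
  intro i _
  rw [iSeq_even, iSeq_odd, ones_even, ones_odd]
  rw [← mul_assoc, ← pow_add, Even.neg_one_pow ⟨ones i, rfl⟩, pow_succ]
  ring

lemma TU_even (k : ℕ) : T (2 * k) = 2 ^ k ∧ U (2 * k) = 2 ^ k := by
  induction k with
  | zero =>
    constructor <;> decide
  | succ k ih =>
    obtain ⟨h1, h2⟩ := ih
    have e1 : T (2 * k + 1) = 2 ^ (k + 1) := by rw [T_succ, h1, h2]; ring
    have e2 : U (2 * k + 1) = 0 := by rw [U_succ, h1, h2]; ring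
    constructor
    · rw [show 2 * (k + 1) = (2 * k + 1) + 1 by ring, T_succ, e1, e2]; ring
    · rw [show 2 * (k + 1) = (2 * k + 1) + 1 by ring, U_succ, e1, e2]; ring

lemma T_odd (k : ℕ) : T (2 * k + 1) = 2 ^ (k + 1) := by
  obtain ⟨h1, h2⟩ := TU_even k
  rw [T_succ, h1, h2]; ring

lemma S_val (k : ℕ) : S (2 ^ (2 * k + 1) - 1) = 2 ^ (k + 1) := by
  have h1 : 2 ^ (2 * k + 1) - 1 + 1 = 2 ^ (2 * k + 1) :=
    Nat.sub_add_cancel (Nat.one_le_two_pow)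
  rw [S, h1, ← T, T_odd]

open Filter

theorem summatory_max_limit :
    Filter.Tendsto
      (fun k : ℕ => (S (2 ^ (2 * k + 1) - 1) : ℝ) / Real.sqrt ((2 : ℝ) ^ (2 * k + 1) - 1))
      Filter.atTop (nhds (Real.sqrt 2)) := by
  have hpos : ∀ k : ℕ, (1:ℝ) < (2:ℝ) ^ (2*k+1) := by
    intro k
    have h := pow_lt_pow_right₀ (a := (2:ℝ)) (by norm_num) (show 0 < 2*k+1 by omega)
    simpa using h
  have key : ∀ k : ℕ, (S (2 ^ (2*k+1) - 1) : ℝ) / Real.sqrt ((2:ℝ) ^ (2*k+1) - 1)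
      = Real.sqrt (2 + 2 / ((2:ℝ) ^ (2*k+1) - 1)) := by
    intro k
    have h1 : (0:ℝ) < (2:ℝ) ^ (2*k+1) - 1 := by linarith [hpos k]
    have hSv : (S (2 ^ (2*k+1) - 1) : ℝ) = 2 ^ (k+1) := by
      rw [S_val]; push_cast; ring
    rw [hSv,
      show (2:ℝ) ^ (k+1) = Real.sqrt (((2:ℝ) ^ (k+1)) ^ 2) from
        (Real.sqrt_sq (by positivity)).symm,
      ← Real.sqrt_div (by positivity)]
    congr 1
    field_simp
    ring
  have h1 : Filter.Tendsto (fun k : ℕ => (2:ℝ) ^ (2*k+1)) atTop atTop := by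
    apply (tendsto_pow_atTop_atTop_of_one_lt (by norm_num : (1:ℝ) < 2)).comp
    exact Filter.tendsto_atTop_mono (fun n => by simp; omega) Filter.tendsto_id
  have h2 : Filter.Tendsto (fun k : ℕ => (2:ℝ) ^ (2*k+1) - 1) atTop atTop := by
    simpa [sub_eq_add_neg] using Filter.tendsto_atTop_add_const_right atTop (-1 : ℝ) h1
  have h3 : Filter.Tendsto (fun k : ℕ => 2 / ((2:ℝ) ^ (2*k+1) - 1)) atTop (nhds 0) :=
    Filter.Tendsto.div_atTop tendsto_const_nhds h2
  have h4 : Filter.Tendsto (fun k : ℕ => 2 + 2 / ((2:ℝ) ^ (2*k+1) - 1)) atTop (nhds 2) := by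
    simpa using (tendsto_const_nhds (x := (2:ℝ)) (f := atTop)).add h3
  exact Filter.Tendsto.congr (fun k => (key k).symm) h4.sqrt
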